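/- arXiv:2106.11503 — 2 statements merged into one kernel-verified Lean document; each statement's English description precedes it below -/
import Mathlib

section
/- (Motzkin–Straus) Let A be the adjacency matrix of a finite simple graph g with clique number ω(g) ≥ 1. Then the maximum of x^T A x over the probability simplex equals 1 - 1/ω(g). -/
open Matrix Finset

namespace MSaux
variable {N : ℕ}

/-- The quadratic form. -/
def Q (a : Fin N → Fin N → ℝ) (x : Fin N → ℝ) : ℝ := ∑ i, ∑ j, a i j * x i * x j

/-- The bilinear form. -/
def B (a : Fin N → Fin N → ℝ) (u v : Fin N → ℝ) : ℝ := ∑ i, ∑ j, a i j * u i * v j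

/-- Shift direction vector. -/
def dd (a0 b0 : Fin N) : Fin N → ℝ :=
  fun i => (if i = a0 then (1:ℝ) else 0) - (if i = b0 then 1 else 0)

/-- The 0/1 adjacency function. -/
def Ag (g : SimpleGraph (Fin N)) [DecidableRel g.Adj] : Fin N → Fin N → ℝ :=
  fun i j => if g.Adj i j then 1 else 0

lemma Ag_symm (g : SimpleGraph (Fin N)) [DecidableRel g.Adj] (i j : Fin N) :
    Ag g i j = Ag g j i := by simp [Ag, g.adj_comm]

lemma Q_eq (g : SimpleGraph (Fin N)) [DecidableRel g.Adj] (x : Fin N → ℝ) :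
    x ⬝ᵥ ((g.adjMatrix ℝ).mulVec x) = Q (Ag g) x := by
  simp only [Q, Ag, dotProduct, mulVec, Finset.mul_sum]
  refine Finset.sum_congr rfl fun i _ => Finset.sum_congr rfl fun j _ => ?_
  simp only [SimpleGraph.adjMatrix_apply]
  ring

lemma Q_add_smul (a : Fin N → Fin N → ℝ) (x d : Fin N → ℝ) (t : ℝ) :
    Q a (x + t • d) = Q a x + t * B a d x + t * B a x d + t ^ 2 * B a d d := by
  have h : ∀ i j, a i j * (x + t • d) i * (x + t • d) j =
      a i j * x i * x j + t * (a i j * d i * x j) + t * (a i j * x i * d j)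
        + t ^ 2 * (a i j * d i * d j) := by
    intro i j
    simp only [Pi.add_apply, Pi.smul_apply, smul_eq_mul]
    ring
  simp only [Q, B, h, Finset.sum_add_distrib, ← Finset.mul_sum]

lemma sum_d_mul (a0 b0 : Fin N) (c : Fin N → ℝ) :
    ∑ i, dd a0 b0 i * c i = c a0 - c b0 := by
  have h : ∀ i, dd a0 b0 i * c i
      = (if i = a0 then c i else 0) - (if i = b0 then c i else 0) := by
    intro i
    unfold dd
    by_cases h1 : i = a0 <;> by_cases h2 : i = b0 <;> simp_all
  simp only [h, Finset.sum_sub_distrib, Finset.sum_ite_eq' Finset.univ]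
  simp

lemma sum_d (a0 b0 : Fin N) : ∑ i, dd a0 b0 i = 0 := by
  have := sum_d_mul a0 b0 (fun _ => (1:ℝ))
  simpa using this

lemma B_d_left (a : Fin N → Fin N → ℝ) (a0 b0 : Fin N) (x : Fin N → ℝ) :
    B a (dd a0 b0) x = (∑ j, a a0 j * x j) - (∑ j, a b0 j * x j) := by
  have h : B a (dd a0 b0) x = ∑ i, dd a0 b0 i * (∑ j, a i j * x j) := by
    simp only [B, Finset.mul_sum]
    exact Finset.sum_congr rfl fun i _ => Finset.sum_congr rfl fun j _ => by ring
  rw [h, sum_d_mul]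

lemma B_d_right (a : Fin N → Fin N → ℝ) (a0 b0 : Fin N) (x : Fin N → ℝ) :
    B a x (dd a0 b0) = (∑ i, a i a0 * x i) - (∑ i, a i b0 * x i) := by
  have h : B a x (dd a0 b0) = ∑ j, dd a0 b0 j * (∑ i, a i j * x i) := by
    rw [B, Finset.sum_comm]
    simp only [Finset.mul_sum]
    exact Finset.sum_congr rfl fun j _ => Finset.sum_congr rfl fun i _ => by ring
  rw [h, sum_d_mul]

lemma B_d_d (a : Fin N → Fin N → ℝ) (a0 b0 : Fin N) :
    B a (dd a0 b0) (dd a0 b0)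
      = a a0 a0 - a a0 b0 - (a b0 a0 - a b0 b0) := by
  rw [B_d_left]
  have h1 : ∑ j, a a0 j * dd a0 b0 j = a a0 a0 - a a0 b0 := by
    have := sum_d_mul a0 b0 (fun j => a a0 j)
    rw [← this]
    exact Finset.sum_congr rfl fun j _ => by ring
  have h2 : ∑ j, a b0 j * dd a0 b0 j = a b0 a0 - a b0 b0 := by
    have := sum_d_mul a0 b0 (fun j => a b0 j)
    rw [← this]
    exact Finset.sum_congr rfl fun j _ => by ring
  rw [h1, h2]

/-- Restriction of the quadratic form to a clique supporting `x`. -/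
lemma Q_supp_clique (g : SimpleGraph (Fin N)) [DecidableRel g.Adj]
    (s : Finset (Fin N)) (hs : ∀ i ∈ s, ∀ j ∈ s, i ≠ j → g.Adj i j)
    (x : Fin N → ℝ) (hsupp : ∀ i, x i ≠ 0 → i ∈ s) :
    Q (Ag g) x = (∑ i ∈ s, x i) ^ 2 - ∑ i ∈ s, x i ^ 2 := by
  have hzero : ∀ i, i ∉ s → x i = 0 := fun i hi => by
    by_contra h; exact hi (hsupp i h)
  have h1 : Q (Ag g) x = ∑ i ∈ s, ∑ j ∈ s, Ag g i j * x i * x j := by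
    rw [Q]
    rw [← Finset.sum_subset (Finset.subset_univ s)
      (fun i _ hi => by simp [hzero i hi])]
    refine Finset.sum_congr rfl fun i _ => ?_
    rw [← Finset.sum_subset (Finset.subset_univ s)
      (fun j _ hj => by simp [hzero j hj])]
  rw [h1]
  have h2 : ∀ i ∈ s, ∀ j ∈ s, Ag g i j * x i * x j
      = x i * x j - (if j = i then x i * x j else 0) := by
    intro i hi j hj
    by_cases hij : i = j
    · subst hij; simp [Ag]
    · simp [Ag, hs i hi j hj hij, Ne.symm hij]
  rw [Finset.sum_congr rfl fun i hi =>
    Finset.sum_congr rfl fun j hj => h2 i hi j hj]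
  simp only [Finset.sum_sub_distrib]
  congr 1
  · rw [sq, Finset.sum_mul_sum]
  · refine Finset.sum_congr rfl fun i hi => ?_
    rw [Finset.sum_ite_eq' s i (fun j => x i * x j), if_pos hi, sq]



/-- One shifting step: move all the mass from `b0` to `a0`. -/
lemma step (g : SimpleGraph (Fin N)) [DecidableRel g.Adj]
    {x : Fin N → ℝ} (hpos : ∀ i, 0 ≤ x i)
    {a0 b0 : Fin N} (hab : a0 ≠ b0) (hnadj : ¬ g.Adj a0 b0)
    (ha0 : x a0 ≠ 0)
    (hL : ∑ j, Ag g b0 j * x j ≤ ∑ j, Ag g a0 j * x j) :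
    ∃ y : Fin N → ℝ, (∀ i, 0 ≤ y i) ∧ (∑ i, y i = ∑ i, x i) ∧
      Q (Ag g) x ≤ Q (Ag g) y ∧
      (univ.filter fun i => y i ≠ 0) ⊆ (univ.filter fun i => x i ≠ 0).erase b0 := by
  set t := x b0 with ht
  refine ⟨x + t • dd a0 b0, ?_, ?_, ?_, ?_⟩
  · intro i
    simp only [Pi.add_apply, Pi.smul_apply, smul_eq_mul, dd]
    by_cases h1 : i = a0 <;> by_cases h2 : i = b0 <;>
      simp_all <;> nlinarith [hpos i, hpos a0, hpos b0]
  · simp only [Pi.add_apply, Pi.smul_apply, smul_eq_mul, Finset.sum_add_distrib,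
      ← Finset.mul_sum, sum_d, mul_zero, add_zero]
  · rw [Q_add_smul]
    have hBdd : B (Ag g) (dd a0 b0) (dd a0 b0) = 0 := by
      rw [B_d_d]
      have h1 : Ag g a0 a0 = 0 := by simp [Ag]
      have h2 : Ag g b0 b0 = 0 := by simp [Ag]
      have h3 : Ag g a0 b0 = 0 := by simp [Ag, hnadj]
      have h4 : Ag g b0 a0 = 0 := by simp [Ag]; exact fun h => hnadj h.symm
      rw [h1, h2, h3, h4]; ring
    have hBdx : 0 ≤ B (Ag g) (dd a0 b0) x := by
      rw [B_d_left]; linarith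
    have hBxd : 0 ≤ B (Ag g) x (dd a0 b0) := by
      rw [B_d_right]
      have e1 : ∑ i, Ag g i a0 * x i = ∑ j, Ag g a0 j * x j :=
        Finset.sum_congr rfl fun i _ => by rw [Ag_symm]
      have e2 : ∑ i, Ag g i b0 * x i = ∑ j, Ag g b0 j * x j :=
        Finset.sum_congr rfl fun i _ => by rw [Ag_symm]
      rw [e1, e2]; linarith
    have ht0 : 0 ≤ t := hpos b0
    nlinarith [mul_nonneg ht0 hBdx, mul_nonneg ht0 hBxd, sq_nonneg t]
  · intro i hi
    rw [Finset.mem_filter] at hi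
    simp only [Finset.mem_filter, Finset.mem_univ, true_and, Pi.add_apply,
      Pi.smul_apply, smul_eq_mul, dd] at hi
    have hib0 : i ≠ b0 := by
      rintro rfl
      simp [if_neg (Ne.symm hab), ht] at hi
    rw [Finset.mem_erase]
    refine ⟨hib0, Finset.mem_filter.2 ⟨Finset.mem_univ _, ?_⟩⟩
    by_cases hia : i = a0
    · subst hia; exact ha0
    · simpa [hia, hib0] using hi


/-- Upper bound by induction on the support size. -/
lemma ub (g : SimpleGraph (Fin N)) [DecidableRel g.Adj] (w : ℕ) (hw : 1 ≤ w)
    (hmax : ∀ (n : ℕ) (s : Finset (Fin N)), g.IsNClique n s → n ≤ w) :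
    ∀ (n : ℕ) (x : Fin N → ℝ), (univ.filter fun i => x i ≠ 0).card ≤ n →
      (∀ i, 0 ≤ x i) → (∑ i, x i = 1) → Q (Ag g) x ≤ 1 - 1 / (w : ℝ) := by
  intro n
  induction n with
  | zero =>
    intro x hcard hpos hsum
    exfalso
    have hempty : (univ.filter fun i => x i ≠ 0) = ∅ :=
      Finset.card_eq_zero.1 (Nat.le_zero.1 hcard)
    have hz : ∀ i, x i = 0 := by
      intro i
      by_contra h
      have : i ∈ (univ.filter fun i => x i ≠ 0) :=
        Finset.mem_filter.2 ⟨Finset.mem_univ _, h⟩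
      simp [hempty] at this
    rw [Finset.sum_congr rfl fun i _ => hz i] at hsum
    simp at hsum
  | succ n ih =>
    intro x hcard hpos hsum
    set s := (univ.filter fun i => x i ≠ 0) with hsdef
    by_cases hcl2 : ∃ a0 ∈ s, ∃ b0 ∈ s, a0 ≠ b0 ∧ ¬ g.Adj a0 b0
    · obtain ⟨a0, ha0, b0, hb0, hab, hnadj⟩ := hcl2
      have hxa0 : x a0 ≠ 0 := (Finset.mem_filter.1 ha0).2
      have hxb0 : x b0 ≠ 0 := (Finset.mem_filter.1 hb0).2
      have hkey : ∀ (a1 b1 : Fin N), a1 ≠ b1 → ¬ g.Adj a1 b1 → x a1 ≠ 0 → b1 ∈ s →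
          (∑ j, Ag g b1 j * x j ≤ ∑ j, Ag g a1 j * x j) →
          Q (Ag g) x ≤ 1 - 1 / (w : ℝ) := by
        intro a1 b1 hab1 hnadj1 hxa1 hb1 hL
        obtain ⟨y, hy0, hysum, hQle, hysub⟩ := step g hpos hab1 hnadj1 hxa1 hL
        have hycard : (univ.filter fun i => y i ≠ 0).card ≤ n := by
          calc (univ.filter fun i => y i ≠ 0).card ≤ (s.erase b1).card :=
                Finset.card_le_card hysub
            _ = s.card - 1 := Finset.card_erase_of_mem hb1
            _ ≤ n := by
                have hb1s : 1 ≤ s.card := Finset.card_pos.2 ⟨b1, hb1⟩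
                omega
        exact hQle.trans (ih y hycard hy0 (by rw [hysum, hsum]))
      rcases le_total (∑ j, Ag g b0 j * x j) (∑ j, Ag g a0 j * x j) with hL | hL
      · exact hkey a0 b0 hab hnadj hxa0 hb0 hL
      · exact hkey b0 a0 hab.symm (fun h => hnadj h.symm) hxb0 ha0 hL
    · push_neg at hcl2
      have hclique : ∀ i ∈ s, ∀ j ∈ s, i ≠ j → g.Adj i j := hcl2
      have hclq : g.IsNClique s.card s :=
        ⟨fun i hi j hj hij => hclique i (Finset.mem_coe.1 hi) j (Finset.mem_coe.1 hj) hij, rfl⟩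
      have hkw : s.card ≤ w := hmax _ _ hclq
      have hsupp : ∀ i, x i ≠ 0 → i ∈ s := fun i h =>
        Finset.mem_filter.2 ⟨Finset.mem_univ _, h⟩
      have hzero : ∀ i, i ∉ s → x i = 0 := fun i hi => by
        by_contra h; exact hi (hsupp i h)
      have hsum_s : ∑ i ∈ s, x i = 1 := by
        rw [Finset.sum_subset (Finset.subset_univ s) fun i _ hi => hzero i hi]
        exact hsum
      have hQ : Q (Ag g) x = 1 - ∑ i ∈ s, x i ^ 2 := by
        rw [Q_supp_clique g s hclique x hsupp, hsum_s]; ring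
      have hne : s.Nonempty := by
        rcases Finset.eq_empty_or_nonempty s with h | h
        · exfalso; rw [h] at hsum_s; simp at hsum_s
        · exact h
      have hcauchy : (1 : ℝ) ≤ (s.card : ℝ) * ∑ i ∈ s, x i ^ 2 := by
        have := sq_sum_le_card_mul_sum_sq (s := s) (f := x)
        rw [hsum_s] at this
        simpa using this
      have hsq : (0:ℝ) ≤ ∑ i ∈ s, x i ^ 2 := by positivity
      have hwpos : (0:ℝ) < (w : ℝ) := by exact_mod_cast hw
      have hcw : (s.card : ℝ) ≤ (w : ℝ) := by exact_mod_cast hkw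
      have h1w : 1 / (w : ℝ) ≤ ∑ i ∈ s, x i ^ 2 := by
        rw [div_le_iff₀ hwpos]
        nlinarith
      rw [hQ]; linarith


end MSaux

open MSaux in
/-- Motzkin–Straus: if A is the adjacency matrix of a finite simple graph g with
clique number w ≥ 1, then the maximum of xᵀAx over the probability simplex is
1 - 1/w. -/
theorem motzkin_straus (N : ℕ) (g : SimpleGraph (Fin N)) [DecidableRel g.Adj]
    (w : ℕ) (hw : 1 ≤ w)
    (hcl : ∃ s : Finset (Fin N), g.IsNClique w s)
    (hmax : ∀ (n : ℕ) (s : Finset (Fin N)), g.IsNClique n s → n ≤ w) :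
    IsGreatest
      {v : ℝ | ∃ x : Fin N → ℝ, (∀ i, 0 ≤ x i) ∧ (∑ i, x i = 1) ∧
        v = x ⬝ᵥ ((g.adjMatrix ℝ).mulVec x)}
      (1 - 1 / w) := by
  constructor
  · -- membership: uniform distribution on a w-clique
    obtain ⟨s, hsclq, hscard⟩ := hcl
    have hwpos : (0:ℝ) < (w : ℝ) := by exact_mod_cast hw
    set x : Fin N → ℝ := fun i => if i ∈ s then ((w : ℝ))⁻¹ else 0 with hxdef
    have hsupp : ∀ i, x i ≠ 0 → i ∈ s := by
      intro i h
      by_contra hi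
      simp [hxdef, hi] at h
    have hxs : ∀ i ∈ s, x i = ((w : ℝ))⁻¹ := fun i hi => by simp [hxdef, hi]
    have hsum_s : ∑ i ∈ s, x i = 1 := by
      rw [Finset.sum_congr rfl hxs, Finset.sum_const, hscard, nsmul_eq_mul]
      field_simp
    have hsum : ∑ i, x i = 1 := by
      rw [← Finset.sum_subset (Finset.subset_univ s)
        (fun i _ hi => by simp [hxdef, hi])]
      exact hsum_s
    have hclique : ∀ i ∈ s, ∀ j ∈ s, i ≠ j → g.Adj i j :=
      fun i hi j hj hij => hsclq (Finset.mem_coe.2 hi) (Finset.mem_coe.2 hj) hij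
    have hsq : ∑ i ∈ s, x i ^ 2 = 1 / (w : ℝ) := by
      rw [Finset.sum_congr rfl (fun i hi => by rw [hxs i hi]),
        Finset.sum_const, hscard, nsmul_eq_mul]
      field_simp
    refine ⟨x, fun i => by unfold x; positivity, hsum, ?_⟩
    rw [Q_eq, Q_supp_clique g s hclique x hsupp, hsum_s, hsq]
    norm_num
  · -- upper bound
    rintro v ⟨x, hpos, hsum, rfl⟩
    rw [Q_eq]
    exact ub g w hw hmax _ x le_rfl hpos hsum
end

section
/- For a graph g and integer k ≥ 1: g contains a clique of size k if and only if there exists x in the probability simplex with x^T A x ≥ (k-1)/k, where A is the adjacency matrix of g. (This gives a reduction from CLIQUE to MIXED KANTIAN EQUILIBRIUM.) -/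
open Matrix Finset

variable {N : ℕ}

lemma quad_le (g : SimpleGraph (Fin N)) [DecidableRel g.Adj] (x : Fin N → ℝ)
    (hx : ∀ i, 0 ≤ x i) (hs : ∑ i, x i = 1) :
    x ⬝ᵥ (g.adjMatrix ℝ).mulVec x ≤ 1 - ∑ i, (x i)^2 := by
  rw [SimpleGraph.dotProduct_mulVec_adjMatrix]
  have h1 : ∀ i j : Fin N, (if g.Adj i j then x i * x j else 0)
      ≤ x i * x j - (if i = j then x i * x j else 0) := by
    intro i j
    by_cases h : i = j
    · subst h; simp [g.irrefl]
    · simp only [if_neg h, sub_zero]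
      split
      · exact le_refl _
      · exact mul_nonneg (hx i) (hx j)
  calc (∑ i, ∑ j, if g.Adj i j then x i * x j else 0)
      ≤ ∑ i, ∑ j, (x i * x j - if i = j then x i * x j else 0) := by
        apply Finset.sum_le_sum; intro i _
        exact Finset.sum_le_sum fun j _ => h1 i j
    _ = (∑ i, x i) * (∑ j, x j) - ∑ i, (x i)^2 := by
        rw [Finset.sum_mul_sum]
        rw [← Finset.sum_sub_distrib]
        congr 1 with i
        rw [Finset.sum_sub_distrib]
        simp [Finset.sum_ite_eq', sq]
    _ = 1 - ∑ i, (x i)^2 := by rw [hs]; ring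

lemma shift_quad (g : SimpleGraph (Fin N)) [DecidableRel g.Adj] (x : Fin N → ℝ)
    (c d : Fin N) (hcd : c ≠ d) (hna : ¬ g.Adj c d) (t : ℝ) :
    (x + t • (Pi.single c 1 - Pi.single d 1)) ⬝ᵥ
        (g.adjMatrix ℝ).mulVec (x + t • (Pi.single c 1 - Pi.single d 1))
      = x ⬝ᵥ (g.adjMatrix ℝ).mulVec x
        + 2 * t * (((g.adjMatrix ℝ).mulVec x) c - ((g.adjMatrix ℝ).mulVec x) d) := by
  set A := g.adjMatrix ℝ with hA
  have hsymm : ∀ i j, A i j = A j i := fun i j => by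
    simp [hA, SimpleGraph.adjMatrix_apply, g.adj_comm]
  have hdiag : ∀ i, A i i = 0 := fun i => by simp [hA]
  have hcd0 : A c d = 0 := by simp [hA, hna]
  have hdc0 : A d c = 0 := by rw [hsymm d c]; exact hcd0
  have hxAu : x ⬝ᵥ A.mulVec (Pi.single c 1 - Pi.single d 1)
      = (A.mulVec x) c - (A.mulVec x) d := by
    rw [mulVec_sub, dotProduct_sub]
    simp only [mulVec_single, mul_one]
    have h1 : x ⬝ᵥ (fun i => A i c) = (A.mulVec x) c := by
      simp only [dotProduct, mulVec]
      exact Finset.sum_congr rfl fun i _ => by rw [hsymm i c]; ring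
    have h2 : x ⬝ᵥ (fun i => A i d) = (A.mulVec x) d := by
      simp only [dotProduct, mulVec]
      exact Finset.sum_congr rfl fun i _ => by rw [hsymm i d]; ring
    rw [MulOpposite.op_one, one_smul, one_smul, col_apply', col_apply', h1, h2]
  have huAx : (Pi.single c 1 - Pi.single d 1) ⬝ᵥ A.mulVec x
      = (A.mulVec x) c - (A.mulVec x) d := by
    rw [sub_dotProduct, single_dotProduct, single_dotProduct]; ring
  have huAu : (Pi.single c 1 - Pi.single d 1) ⬝ᵥ
      A.mulVec (Pi.single c 1 - Pi.single d 1) = 0 := by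
    rw [mulVec_sub, dotProduct_sub, sub_dotProduct, sub_dotProduct]
    simp only [mulVec_single, mul_one, single_dotProduct, one_mul]
    simp only [MulOpposite.op_one, one_smul, col_apply]
    rw [hdiag c, hdiag d, hcd0, hdc0]; ring
  rw [mulVec_add, mulVec_smul, dotProduct_add, add_dotProduct, add_dotProduct,
    dotProduct_smul, smul_dotProduct, smul_dotProduct, dotProduct_smul,
    hxAu, huAx, huAu]
  simp only [smul_eq_mul]
  ring

lemma no_clique_bound (g : SimpleGraph (Fin N)) [DecidableRel g.Adj] (k : ℕ)
    (hk : 1 ≤ k) (hno : ∀ s : Finset (Fin N), ¬ g.IsNClique k s) :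
    ∀ n (x : Fin N → ℝ), (Finset.univ.filter (fun i => x i ≠ 0)).card ≤ n →
      (∀ i, 0 ≤ x i) → ∑ i, x i = 1 →
      x ⬝ᵥ (g.adjMatrix ℝ).mulVec x < ((k:ℝ) - 1)/k := by
  intro n
  induction n with
  | zero =>
    intro x hcard hx hs
    exfalso
    rw [Nat.le_zero, Finset.card_eq_zero, Finset.filter_eq_empty_iff] at hcard
    simp only [ne_eq, not_not] at hcard
    rw [Finset.sum_congr rfl (fun i _ => hcard (Finset.mem_univ i))] at hs
    simp at hs
  | succ n ih =>
    intro x hcard hx hs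
    set S := Finset.univ.filter (fun i => x i ≠ 0) with hS
    have hsumS : ∑ i ∈ S, x i = 1 := by
      rw [← hs]; exact Finset.sum_filter_ne_zero _
    have hSne : S.Nonempty := by
      rcases Finset.eq_empty_or_nonempty S with h | h
      · rw [h, Finset.sum_empty] at hsumS; norm_num at hsumS
      · exact h
    by_cases hcl : ∀ c ∈ S, ∀ d ∈ S, c ≠ d → g.Adj c d
    · -- support is a clique, so |S| < k, use the quadratic bound
      have hSk : S.card < k := by
        by_contra h
        push_neg at h
        obtain ⟨t, hts, htc⟩ := Finset.exists_subset_card_eq h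
        exact hno t ⟨fun a ha b hb hab => hcl a (hts ha) b (hts hb) hab, htc⟩
      have hcs : (1:ℝ)/S.card ≤ ∑ i, (x i)^2 := by
        have h1 : ((∑ i ∈ S, x i))^2 ≤ S.card * ∑ i ∈ S, (x i)^2 :=
          sq_sum_le_card_mul_sum_sq
        rw [hsumS, one_pow] at h1
        have h2 : ∑ i ∈ S, (x i)^2 ≤ ∑ i, (x i)^2 :=
          Finset.sum_le_sum_of_subset_of_nonneg (Finset.filter_subset _ _)
            (fun i _ _ => sq_nonneg _)
        have hSpos : (0:ℝ) < S.card := by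
          exact_mod_cast Finset.card_pos.mpr hSne
        rw [div_le_iff₀ hSpos]
        calc (1:ℝ) ≤ S.card * ∑ i ∈ S, (x i)^2 := h1
          _ ≤ S.card * ∑ i, (x i)^2 := by
              exact mul_le_mul_of_nonneg_left h2 hSpos.le
          _ = (∑ i, (x i)^2) * S.card := by ring
      have hSpos : (0:ℝ) < S.card := by exact_mod_cast Finset.card_pos.mpr hSne
      have hkpos : (0:ℝ) < k := by exact_mod_cast hk
      calc x ⬝ᵥ (g.adjMatrix ℝ).mulVec x ≤ 1 - ∑ i, (x i)^2 := quad_le g x hx hs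
        _ ≤ 1 - 1/S.card := by linarith
        _ < 1 - 1/k := by
            have : (S.card:ℝ) < k := by exact_mod_cast hSk
            have := one_div_lt_one_div_of_lt hSpos this
            linarith
        _ = ((k:ℝ) - 1)/k := by field_simp
    · -- shift weight between two nonadjacent support elements
      push_neg at hcl
      obtain ⟨a, haS, b, hbS, hab, hnadj⟩ := hcl
      -- choose (c, d) so that (Ax) d ≤ (Ax) c
      obtain ⟨c, d, hcS, hdS, hcd, hna, hord⟩ :
          ∃ c d, c ∈ S ∧ d ∈ S ∧ c ≠ d ∧ ¬ g.Adj c d ∧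
            ((g.adjMatrix ℝ).mulVec x) d ≤ ((g.adjMatrix ℝ).mulVec x) c := by
        rcases le_total (((g.adjMatrix ℝ).mulVec x) b) (((g.adjMatrix ℝ).mulVec x) a) with h | h
        · exact ⟨a, b, haS, hbS, hab, hnadj, h⟩
        · exact ⟨b, a, hbS, haS, hab.symm, fun h' => hnadj ((g.adj_comm a b).mpr h'), h⟩
      set y := x + x d • (Pi.single c 1 - Pi.single d 1) with hy
      have hyi : ∀ i, y i = x i + x d * ((if i = c then (1:ℝ) else 0) - (if i = d then 1 else 0)) := by
        intro i
        simp [hy, Pi.single_apply]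
      have hyd : y d = 0 := by rw [hyi]; simp [if_neg (Ne.symm hcd)]
      have hyc : y c = x c + x d := by rw [hyi]; simp [if_neg hcd]
      have hyother : ∀ i, i ≠ c → i ≠ d → y i = x i := by
        intro i h1 h2; rw [hyi]; simp [h1, h2]
      have hynn : ∀ i, 0 ≤ y i := by
        intro i
        by_cases h1 : i = c
        · rw [h1, hyc]; exact add_nonneg (hx c) (hx d)
        · by_cases h2 : i = d
          · rw [h2, hyd]
          · rw [hyother i h1 h2]; exact hx i
      have hysum : ∑ i, y i = 1 := by
        simp only [hy, Pi.add_apply, Pi.smul_apply, Pi.sub_apply, smul_eq_mul]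
        rw [Finset.sum_add_distrib, hs]
        simp [mul_sub, Finset.sum_sub_distrib, Finset.mul_sum,
          Finset.sum_pi_single', Pi.single_apply]
      have hsupp : (Finset.univ.filter (fun i => y i ≠ 0)) ⊆ S.erase d := by
        intro i hi
        simp only [Finset.mem_filter, Finset.mem_univ, true_and, ne_eq] at hi
        rw [Finset.mem_erase]
        constructor
        · rintro rfl; exact hi hyd
        · by_cases h1 : i = c
          · subst h1; exact hcS
          · by_cases h2 : i = d
            · exact absurd (h2 ▸ hyd) hi
            · rw [hS, Finset.mem_filter]
              exact ⟨Finset.mem_univ _, fun h => hi (by rw [hyother i h1 h2, h])⟩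
      have hycard : (Finset.univ.filter (fun i => y i ≠ 0)).card ≤ n := by
        have h1 := Finset.card_le_card hsupp
        have h2 : (S.erase d).card = S.card - 1 := Finset.card_erase_of_mem hdS
        have h3 : 1 ≤ S.card := Finset.card_pos.mpr hSne
        omega
      have hfy := ih y hycard hynn hysum
      have hshift := shift_quad g x c d hcd hna (x d)
      have : x ⬝ᵥ (g.adjMatrix ℝ).mulVec x ≤ y ⬝ᵥ (g.adjMatrix ℝ).mulVec y := by
        rw [hy, hshift]
        have hxd : 0 ≤ x d := hx d
        nlinarith [sub_nonneg.mpr hord]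
      linarith


/-- Reduction from CLIQUE to MIXED KANTIAN EQUILIBRIUM: a graph g has a clique
of size k (k ≥ 1) iff there is a point x of the probability simplex with
xᵀAx ≥ (k-1)/k, A being the adjacency matrix of g. -/
theorem clique_iff_mixed_kantian (N : ℕ) (g : SimpleGraph (Fin N))
    [DecidableRel g.Adj] (k : ℕ) (hk : 1 ≤ k) :
    (∃ s : Finset (Fin N), g.IsNClique k s) ↔
    (∃ x : Fin N → ℝ, (∀ i, 0 ≤ x i) ∧ (∑ i, x i = 1) ∧
      ((k:ℝ) - 1) / k ≤ x ⬝ᵥ ((g.adjMatrix ℝ).mulVec x)) := by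
  constructor
  · rintro ⟨s, hclq, hcard⟩
    have hkpos : (0:ℝ) < k := by exact_mod_cast hk
    set x : Fin N → ℝ := fun i => if i ∈ s then 1/k else 0 with hx
    have hxnn : ∀ i, 0 ≤ x i := by
      intro i; rw [hx]; dsimp only; split
      · positivity
      · exact le_refl 0
    refine ⟨x, hxnn, ?_, ?_⟩
    · rw [hx]
      rw [Finset.sum_ite_mem, Finset.univ_inter, Finset.sum_const, hcard]
      simp
      field_simp
    · rw [SimpleGraph.dotProduct_mulVec_adjMatrix]
      have key : ((k:ℝ) - 1)/k = ∑ i ∈ s, ∑ j ∈ s.erase i, (if g.Adj i j then x i * x j else 0) := by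
        have hin : ∀ i ∈ s, ∀ j ∈ s.erase i, (if g.Adj i j then x i * x j else 0) = 1/k^2 := by
          intro i hi j hj
          rw [Finset.mem_erase] at hj
          have hadj : g.Adj i j := hclq hi hj.2 (Ne.symm hj.1)
          rw [if_pos hadj, hx]
          simp only [if_pos hi, if_pos hj.2]
          field_simp
        rw [Finset.sum_congr rfl (fun i hi => Finset.sum_congr rfl (hin i hi))]
        simp only [Finset.sum_const, nsmul_eq_mul]
        rw [Finset.sum_congr rfl (fun i hi => by rw [Finset.card_erase_of_mem hi, hcard])]
        rw [Finset.sum_const, nsmul_eq_mul, hcard]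
        have h1 : (1:ℝ) ≤ (k:ℝ) := by exact_mod_cast hk
        push_cast
        field_simp
        rw [Nat.cast_sub hk]; ring
      rw [key]
      have hnn : ∀ (t : Finset (Fin N)) (i : Fin N),
          0 ≤ ∑ j ∈ t, (if g.Adj i j then x i * x j else 0) := by
        intro t i
        apply Finset.sum_nonneg
        intro j _
        split
        · exact mul_nonneg (hxnn i) (hxnn j)
        · exact le_refl 0
      calc ∑ i ∈ s, ∑ j ∈ s.erase i, (if g.Adj i j then x i * x j else 0)
          ≤ ∑ i ∈ s, ∑ j, (if g.Adj i j then x i * x j else 0) := by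
            apply Finset.sum_le_sum
            intro i _
            apply Finset.sum_le_sum_of_subset_of_nonneg (Finset.subset_univ _)
            intro j _ _
            split
            · exact mul_nonneg (hxnn i) (hxnn j)
            · exact le_refl 0
        _ ≤ ∑ i, ∑ j, (if g.Adj i j then x i * x j else 0) :=
            Finset.sum_le_sum_of_subset_of_nonneg (Finset.subset_univ _)
              (fun i _ _ => hnn _ i)
  · rintro ⟨x, hxnn, hxs, hxq⟩
    by_contra hno
    push_neg at hno
    have := no_clique_bound g k hk hno N x
      (le_trans (Finset.card_le_univ _) (by simp)) hxnn hxs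
    linarith
end
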